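/- Let F be a field and let π₁, π₂, x, y ∈ F^× be such that 1 + π₁x, 1 + π₂y, and 1 + π₁x(1 + π₂y) are all nonzero. Set z = xy/(1 + π₁x). Then in K₂^M(F): {1 + π₁x(1 + π₂y), 1 + π₂y} = −{1 + π₁π₂z, −π₁x} − {1 + π₁x, −π₁x}. -/

import Mathlib

open TensorProduct

/-- The Steinberg subgroup of `F^× ⊗ F^×`, generated by `a ⊗ (1-a)` for `a ≠ 0, 1`. -/
noncomputable def SteinbergSubgroup (F : Type) [Field F] :
    AddSubgroup (Additive Fˣ ⊗[ℤ] Additive Fˣ) :=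
  AddSubgroup.closure
    { z | ∃ (a : Fˣ) (h : (a : F) ≠ 1),
        z = Additive.ofMul a ⊗ₜ[ℤ]
            Additive.ofMul (Units.mk0 (1 - (a : F)) (sub_ne_zero.mpr (Ne.symm h))) }

/-- The second Milnor K-group `K₂^M(F)` of a field `F`. -/
def MilnorK2 (F : Type) [Field F] :=
  (Additive Fˣ ⊗[ℤ] Additive Fˣ) ⧸ SteinbergSubgroup F

noncomputable instance (F : Type) [Field F] : AddCommGroup (MilnorK2 F) :=
  QuotientAddGroup.Quotient.addCommGroup (SteinbergSubgroup F)

/-- The Milnor symbol `{a, b} ∈ K₂^M(F)`. -/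
noncomputable def MilnorK2.symbol {F : Type} [Field F] (a b : Fˣ) : MilnorK2 F :=
  QuotientAddGroup.mk (Additive.ofMul a ⊗ₜ[ℤ] Additive.ofMul b)

section Aux
variable {F : Type} [Field F]

lemma MilnorK2.symbol_mul_left (a b c : Fˣ) :
    MilnorK2.symbol (a * b) c = MilnorK2.symbol a c + MilnorK2.symbol b c := by
  unfold MilnorK2.symbol
  rw [show Additive.ofMul (a * b) = Additive.ofMul a + Additive.ofMul b from rfl, add_tmul]
  rfl

lemma MilnorK2.symbol_mul_right (a b c : Fˣ) :
    MilnorK2.symbol a (b * c) = MilnorK2.symbol a b + MilnorK2.symbol a c := by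
  unfold MilnorK2.symbol
  rw [show Additive.ofMul (b * c) = Additive.ofMul b + Additive.ofMul c from rfl, tmul_add]
  rfl

lemma MilnorK2.symbol_one_left (c : Fˣ) : MilnorK2.symbol 1 c = 0 := by
  unfold MilnorK2.symbol
  rw [show Additive.ofMul (1 : Fˣ) = (0 : Additive Fˣ) from rfl, zero_tmul]
  rfl

lemma MilnorK2.symbol_one_right (a : Fˣ) : MilnorK2.symbol a 1 = 0 := by
  unfold MilnorK2.symbol
  rw [show Additive.ofMul (1 : Fˣ) = (0 : Additive Fˣ) from rfl, tmul_zero]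
  rfl

lemma MilnorK2.symbol_inv_left (a c : Fˣ) :
    MilnorK2.symbol a⁻¹ c = - MilnorK2.symbol a c := by
  have h := MilnorK2.symbol_mul_left a a⁻¹ c
  rw [mul_inv_cancel, MilnorK2.symbol_one_left] at h
  exact eq_neg_of_add_eq_zero_right h.symm

lemma MilnorK2.symbol_inv_right (a c : Fˣ) :
    MilnorK2.symbol a c⁻¹ = - MilnorK2.symbol a c := by
  have h := MilnorK2.symbol_mul_right a c c⁻¹
  rw [mul_inv_cancel, MilnorK2.symbol_one_right] at h
  exact eq_neg_of_add_eq_zero_right h.symm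

lemma MilnorK2.steinberg (a : Fˣ) (h : (a : F) ≠ 1) :
    MilnorK2.symbol a (Units.mk0 (1 - (a : F)) (sub_ne_zero.mpr (Ne.symm h))) = 0 := by
  unfold MilnorK2.symbol
  refine (QuotientAddGroup.eq_zero_iff _).mpr ?_
  exact AddSubgroup.subset_closure ⟨a, h, rfl⟩

lemma MilnorK2.symbol_self_neg (a : Fˣ) : MilnorK2.symbol a (-a) = 0 := by
  by_cases ha : (a : F) = 1
  · have : a = 1 := Units.ext ha
    subst this
    exact MilnorK2.symbol_one_left (-1)
  · have ha' : ((a⁻¹ : Fˣ) : F) ≠ 1 := by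
      rw [Units.val_inv_eq_inv_val]
      intro hh
      exact ha (by field_simp at hh; simp [hh])
    set b := Units.mk0 (1 - (a : F)) (sub_ne_zero.mpr (Ne.symm ha)) with hb
    set b' := Units.mk0 (1 - ((a⁻¹ : Fˣ) : F)) (sub_ne_zero.mpr (Ne.symm ha')) with hb'
    have key : -a = b * b'⁻¹ := by
      have hav : (a : F) ≠ 0 := a.ne_zero
      have hb'ne : (1 : F) - ((a⁻¹ : Fˣ) : F) ≠ 0 := sub_ne_zero.mpr (Ne.symm ha')
      rw [Units.val_inv_eq_inv_val] at hb'ne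
      rw [Units.ext_iff]
      simp only [hb, hb', Units.val_neg, Units.val_mul, Units.val_inv_eq_inv_val,
        Units.val_mk0]
      have h5 : (a : F) - 1 ≠ 0 := sub_ne_zero.mpr ha
      field_simp [h5]
      ring
    rw [key, MilnorK2.symbol_mul_right, MilnorK2.symbol_inv_right,
      MilnorK2.steinberg a ha]
    have h2 : MilnorK2.symbol a b' = 0 := by
      have := MilnorK2.steinberg a⁻¹ ha'
      rw [MilnorK2.symbol_inv_left] at this
      exact neg_eq_zero.mp this
    rw [h2]
    simp

lemma MilnorK2.symbol_antisymm (a b : Fˣ) :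
    MilnorK2.symbol a b = - MilnorK2.symbol b a := by
  have h : MilnorK2.symbol (a * b) (-(a * b)) = 0 := MilnorK2.symbol_self_neg (a * b)
  rw [MilnorK2.symbol_mul_left] at h
  rw [show MilnorK2.symbol a (-(a * b)) = MilnorK2.symbol a (-a) + MilnorK2.symbol a b by
    rw [show -(a * b) = (-a) * b by rw [neg_mul], MilnorK2.symbol_mul_right]] at h
  rw [show MilnorK2.symbol b (-(a * b)) = MilnorK2.symbol b a + MilnorK2.symbol b (-b) by
    rw [show -(a * b) = a * (-b) by rw [mul_neg], MilnorK2.symbol_mul_right]] at h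
  rw [MilnorK2.symbol_self_neg, MilnorK2.symbol_self_neg, zero_add, add_zero] at h
  exact eq_neg_of_add_eq_zero_left h

end Aux

/-- For `π₁, π₂, x, y ∈ F^×` with `1 + π₁x`, `1 + π₂y` and `1 + π₁x(1 + π₂y)` nonzero,
setting `z = xy/(1 + π₁x)` (so that `1 + π₁π₂z ≠ 0` automatically), one has
`{1 + π₁x(1 + π₂y), 1 + π₂y} = -{1 + π₁π₂z, -π₁x} - {1 + π₁x, -π₁x}` in `K₂^M(F)`. -/
theorem stmt11 {F : Type} [Field F] (π₁ π₂ x y : F)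
    (hπ₁ : π₁ ≠ 0) (hπ₂ : π₂ ≠ 0) (hx : x ≠ 0) (hy : y ≠ 0)
    (h1 : (1 : F) + π₁ * x ≠ 0) (h2 : (1 : F) + π₂ * y ≠ 0)
    (h3 : (1 : F) + π₁ * x * ((1 : F) + π₂ * y) ≠ 0) :
    ∀ hz : (1 : F) + π₁ * π₂ * (x * y / ((1 : F) + π₁ * x)) ≠ 0,
      MilnorK2.symbol (Units.mk0 ((1 : F) + π₁ * x * ((1 : F) + π₂ * y)) h3)
          (Units.mk0 ((1 : F) + π₂ * y) h2) =
        - MilnorK2.symbol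
            (Units.mk0 ((1 : F) + π₁ * π₂ * (x * y / ((1 : F) + π₁ * x))) hz)
            (- Units.mk0 (π₁ * x) (mul_ne_zero hπ₁ hx))
          - MilnorK2.symbol (Units.mk0 ((1 : F) + π₁ * x) h1)
              (- Units.mk0 (π₁ * x) (mul_ne_zero hπ₁ hx)) := by
  intro hz
  set p := - Units.mk0 (π₁ * x) (mul_ne_zero hπ₁ hx) with hp
  set u1 := Units.mk0 ((1 : F) + π₁ * x) h1 with hu1
  set u2 := Units.mk0 ((1 : F) + π₂ * y) h2 with hu2
  set u3 := Units.mk0 ((1 : F) + π₁ * x * ((1 : F) + π₂ * y)) h3 with hu3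
  set uz := Units.mk0 ((1 : F) + π₁ * π₂ * (x * y / ((1 : F) + π₁ * x))) hz with huz
  have hsplit : u3 = u1 * uz := by
    rw [Units.ext_iff]
    simp only [hu1, hu3, huz, Units.val_mul, Units.val_mk0]
    field_simp
    ring
  have hc : (π₁ * x * ((1 : F) + π₂ * y)) ≠ 0 := mul_ne_zero (mul_ne_zero hπ₁ hx) h2
  have hneg : p * u2 = - Units.mk0 (π₁ * x * ((1 : F) + π₂ * y)) hc := by
    rw [Units.ext_iff]
    simp only [hp, hu2, Units.val_neg, Units.val_mul, Units.val_mk0]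
    ring
  have hst : MilnorK2.symbol u3 (p * u2) = 0 := by
    rw [hneg]
    have h1' : ((- Units.mk0 (π₁ * x * ((1 : F) + π₂ * y)) hc : Fˣ) : F) ≠ 1 := by
      simp only [Units.val_neg, Units.val_mk0]
      intro hh
      apply h3
      linear_combination -hh
    have hs := MilnorK2.steinberg (- Units.mk0 (π₁ * x * ((1 : F) + π₂ * y)) hc) h1'
    rw [MilnorK2.symbol_antisymm] at hs
    have h4 : Units.mk0 (1 - ((- Units.mk0 (π₁ * x * ((1 : F) + π₂ * y)) hc : Fˣ) : F))
        (sub_ne_zero.mpr (Ne.symm h1')) = u3 := by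
      rw [Units.ext_iff]
      simp only [hu3, Units.val_neg, Units.val_mk0]
      ring
    rw [h4] at hs
    exact neg_eq_zero.mp hs
  rw [MilnorK2.symbol_mul_right] at hst
  have e1 : MilnorK2.symbol u3 u2 = - MilnorK2.symbol u3 p :=
    eq_neg_of_add_eq_zero_right hst
  rw [e1, hsplit, MilnorK2.symbol_mul_left]
  abel
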